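/- arXiv:2204.05890 — 2 statements merged into one kernel-verified Lean document; each statement's English description precedes it below -/
import Mathlib

section
/- Let p be a prime with p ≥ 7, let k ≥ 1 and d be integers, and for integers m, ε_a, ε_b with 0 ≤ m ≤ r(k) − 1 and ε_a, ε_b ∈ {0,1} set D(m, ε_a, ε_b) = m(2p³ − 2) + ε_a(2p^{[k+1]} − 1) + ε_b(2p^{[k+2]} − 1) + (2p^{[k]} − 1) − 2p³·d·p^{k−1}. If d ≥ p + 1, then D(m, ε_a, ε_b) ≤ −2p³ + 2p² − 1 for all such m, ε_a, ε_b; if d ≤ −1, then D(m, ε_a, ε_b) ≥ 2p³ + 2p − 1 for all such m, ε_a, ε_b. -/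
/-- Main estimate, exponents abstracted. -/
lemma S_kd_helper (P rk m εa εb d : ℤ) (K ea eb ec : ℕ)
    (hP : 7 ≤ P) (hm0 : 0 ≤ m) (hm1 : m ≤ rk - 1)
    (ha : εa = 0 ∨ εa = 1) (hb : εb = 0 ∨ εb = 1)
    (hrk : rk * (P ^ 3 - 1) ≤ P ^ (K + 4) - P)
    (hsum : P ^ ea + P ^ eb + P ^ ec = P + P ^ 2 + P ^ 3)
    (hec : 1 ≤ ec) :
    (P + 1 ≤ d →
      m * (2 * P ^ 3 - 2) + εa * (2 * P ^ ea - 1) + εb * (2 * P ^ eb - 1)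
        + (2 * P ^ ec - 1) - 2 * P ^ 3 * d * P ^ K ≤ -2 * P ^ 3 + 2 * P ^ 2 - 1) ∧
    (d ≤ -1 →
      2 * P ^ 3 + 2 * P - 1 ≤
      m * (2 * P ^ 3 - 2) + εa * (2 * P ^ ea - 1) + εb * (2 * P ^ eb - 1)
        + (2 * P ^ ec - 1) - 2 * P ^ 3 * d * P ^ K) := by
  have hP0 : (0:ℤ) < P := by linarith
  have hpea : (1:ℤ) ≤ P ^ ea := one_le_pow₀ (by linarith)
  have hpeb : (1:ℤ) ≤ P ^ eb := one_le_pow₀ (by linarith)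
  have hpec : P ≤ P ^ ec := by
    calc P = P ^ 1 := (pow_one P).symm
    _ ≤ P ^ ec := pow_le_pow_right₀ (by linarith) hec
  have hpK : (1:ℤ) ≤ P ^ K := one_le_pow₀ (by linarith)
  have hpK3 : P ^ 3 ≤ P ^ (K + 3) := by
    have : P ^ (K + 3) = P ^ K * P ^ 3 := by ring
    nlinarith [pow_pos hP0 3]
  have hA : 0 ≤ εa * (2 * P ^ ea - 1) ∧ εa * (2 * P ^ ea - 1) ≤ 2 * P ^ ea - 1 := by
    rcases ha with h | h <;> subst h <;> constructor <;> linarith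
  have hB : 0 ≤ εb * (2 * P ^ eb - 1) ∧ εb * (2 * P ^ eb - 1) ≤ 2 * P ^ eb - 1 := by
    rcases hb with h | h <;> subst h <;> constructor <;> linarith
  have hM : m * (2 * P ^ 3 - 2) ≤ (rk - 1) * (2 * P ^ 3 - 2) :=
    mul_le_mul_of_nonneg_right hm1 (by nlinarith)
  have e1 : P ^ (K + 4) = P ^ K * P ^ 4 := by ring
  have e2 : P ^ (K + 3) = P ^ K * P ^ 3 := by ring
  constructor
  · intro hd
    have hD : 2 * P ^ (K + 4) + 2 * P ^ (K + 3) ≤ 2 * P ^ 3 * d * P ^ K := by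
      have h5 : 2 * P ^ 3 * (P + 1) * P ^ K ≤ 2 * P ^ 3 * d * P ^ K := by
        have := mul_le_mul_of_nonneg_right
          (mul_le_mul_of_nonneg_left hd (by positivity : (0:ℤ) ≤ 2 * P ^ 3))
          (le_of_lt (pow_pos hP0 K))
        linarith
      nlinarith
    nlinarith [hA.2, hB.2]
  · intro hd
    have hD : 2 * P ^ 3 * d * P ^ K ≤ -(2 * P ^ (K + 3)) := by
      have h5 : 2 * P ^ 3 * d * P ^ K ≤ 2 * P ^ 3 * (-1) * P ^ K := by
        have := mul_le_mul_of_nonneg_right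
          (mul_le_mul_of_nonneg_left hd (by positivity : (0:ℤ) ≤ 2 * P ^ 3))
          (le_of_lt (pow_pos hP0 K))
        linarith
      linarith [e2]
    nlinarith [hA.1, hB.1, mul_nonneg hm0 (by nlinarith : (0:ℤ) ≤ 2 * P ^ 3 - 2)]

lemma S_kd_rbound (p : ℕ) (hp7 : 7 ≤ p)
    (r : ℤ → ℕ) (hr0 : r 0 = 0) (hrm1 : r (-1) = 0) (hrm2 : r (-2) = 0)
    (hrec : ∀ k : ℤ, 1 ≤ k → r k = p ^ k.toNat + r (k - 3)) :
    ∀ n : ℕ, ∀ j : ℤ, 1 ≤ j → j.toNat ≤ n →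
      (r j : ℤ) * ((p:ℤ) ^ 3 - 1) ≤ (p:ℤ) ^ (j.toNat + 3) - (p:ℤ) := by
  have hP : (7:ℤ) ≤ (p:ℤ) := by exact_mod_cast hp7
  intro n
  induction n with
  | zero => intro j hj hjn; omega
  | succ n ih =>
    intro j hj hjn
    have hjt : 1 ≤ j.toNat := by omega
    have hcast : (r j : ℤ) = (p:ℤ) ^ j.toNat + (r (j - 3) : ℤ) := by
      rw [hrec j hj]; push_cast; ring
    have hpj : (p:ℤ) ≤ (p:ℤ) ^ j.toNat := by
      calc (p:ℤ) = (p:ℤ) ^ 1 := (pow_one _).symm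
      _ ≤ (p:ℤ) ^ j.toNat := pow_le_pow_right₀ (by linarith) hjt
    have e1 : (p:ℤ) ^ j.toNat * ((p:ℤ) ^ 3 - 1) = (p:ℤ) ^ (j.toNat + 3) - (p:ℤ) ^ j.toNat := by
      rw [pow_add]; ring
    by_cases h3 : 1 ≤ j - 3
    · have ih' := ih (j - 3) h3 (by omega)
      have htn : (j - 3).toNat + 3 = j.toNat := by omega
      rw [htn] at ih'
      rw [hcast]
      nlinarith
    · have hz : r (j - 3) = 0 := by
        have : j = 1 ∨ j = 2 ∨ j = 3 := by omega
        rcases this with h | h | h <;> subst h <;> norm_num [hr0, hrm1, hrm2]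
      rw [hcast, hz]
      push_cast
      nlinarith

/-- Degree bounds for the basis monomials
`(tμ)^m λ_{[k+1]}^{ε_a} λ_{[k+2]}^{ε_b} λ_{[k]} μ^{−dp^{k−1}}` of `S(k,d)`:
for `d ≥ p + 1` all total degrees are `≤ −2p³ + 2p² − 1`, and for `d ≤ −1`
all total degrees are `≥ 2p³ + 2p − 1`. -/
theorem S_kd_degree_bounds (p : ℕ) (hp : p.Prime) (hp7 : 7 ≤ p)
    (r : ℤ → ℕ) (hr0 : r 0 = 0) (hrm1 : r (-1) = 0) (hrm2 : r (-2) = 0)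
    (hrec : ∀ k : ℤ, 1 ≤ k → r k = p ^ k.toNat + r (k - 3))
    (br : ℤ → ℤ)
    (hbr : ∀ k : ℤ, 1 ≤ k → (br k = 1 ∨ br k = 2 ∨ br k = 3) ∧ (3 : ℤ) ∣ (k - br k))
    (k : ℤ) (hk : 1 ≤ k) (d : ℤ) :
    ∀ m εa εb : ℤ, 0 ≤ m → m ≤ (r k : ℤ) - 1 →
      (εa = 0 ∨ εa = 1) → (εb = 0 ∨ εb = 1) →
    ∀ Dg : ℤ, Dg = m * (2 * (p : ℤ) ^ 3 - 2) + εa * (2 * (p : ℤ) ^ (br (k + 1)).toNat - 1)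
        + εb * (2 * (p : ℤ) ^ (br (k + 2)).toNat - 1) + (2 * (p : ℤ) ^ (br k).toNat - 1)
        - 2 * (p : ℤ) ^ 3 * d * (p : ℤ) ^ (k - 1).toNat →
      (((p : ℤ) + 1 ≤ d → Dg ≤ -2 * (p : ℤ) ^ 3 + 2 * (p : ℤ) ^ 2 - 1) ∧
       (d ≤ -1 → 2 * (p : ℤ) ^ 3 + 2 * (p : ℤ) - 1 ≤ Dg)) := by
  intro m εa εb hm0 hm1 hεa hεb Dg hDg
  subst hDg
  have hP : (7:ℤ) ≤ (p:ℤ) := by exact_mod_cast hp7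
  -- r bound, rewritten with K = (k-1).toNat
  have hrk := S_kd_rbound p hp7 r hr0 hrm1 hrm2 hrec k.toNat k hk le_rfl
  have hKeq : k.toNat + 3 = (k - 1).toNat + 4 := by omega
  rw [hKeq] at hrk
  -- the three branch exponents are a permutation of {1,2,3}
  obtain ⟨hc, hcmod⟩ := hbr k hk
  obtain ⟨ha, hamod⟩ := hbr (k + 1) (by omega)
  obtain ⟨hb, hbmod⟩ := hbr (k + 2) (by omega)
  have hsum : ((p:ℤ)) ^ (br (k+1)).toNat + (p:ℤ) ^ (br (k+2)).toNat + (p:ℤ) ^ (br k).toNat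
      = (p:ℤ) + (p:ℤ) ^ 2 + (p:ℤ) ^ 3 := by
    rcases ha with h1 | h1 | h1 <;> rcases hb with h2 | h2 | h2 <;>
      rcases hc with h3 | h3 | h3 <;>
      simp only [h1, h2, h3] at hamod hbmod hcmod ⊢ <;>
      first
        | omega
        | (simp only [show ((1:ℤ)).toNat = 1 from rfl, show ((2:ℤ)).toNat = 2 from rfl, show ((3:ℤ)).toNat = 3 from rfl]; ring)
  have hec : 1 ≤ (br k).toNat := by omega
  exact S_kd_helper (p:ℤ) (r k : ℤ) m εa εb d (k-1).toNat
    (br (k+1)).toNat (br (k+2)).toNat (br k).toNat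
    hP hm0 hm1 hεa hεb hrk hsum hec
end

section
/- Let p be a prime with p ≥ 7, let k ≥ 4 and d be integers, and for integers m, ε_a, ε_b with 0 ≤ m ≤ r(k−3) − 1 and ε_a, ε_b ∈ {0,1} set D̂(m, ε_a, ε_b) = m(2p³ − 2) + ε_a(2p^{[k+1]} − 1) + ε_b(2p^{[k+2]} − 1) + (2p^{[k]} − 1) − 2d·p^{k−1}. If d ≥ p + 1, then D̂(m, ε_a, ε_b) ≤ −2p³ + 2p² − 1 for all such m, ε_a, ε_b; if d ≤ −1, then D̂(m, ε_a, ε_b) ≥ 2p³ + 2p − 1 for all such m, ε_a, ε_b. -/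
/-- Degree bounds for the basis monomials
`(tμ)^m λ_{[k+1]}^{ε_a} λ_{[k+2]}^{ε_b} t^{dp^{k−1}} λ_{[k]}` of `Ŝ(k,d)` for `k ≥ 4`:
for `d ≥ p + 1` all total degrees are `≤ −2p³ + 2p² − 1`, and for `d ≤ −1`
all total degrees are `≥ 2p³ + 2p − 1`. -/
theorem Shat_kd_degree_bounds (p : ℕ) (hp : p.Prime) (hp7 : 7 ≤ p)
    (r : ℤ → ℕ) (hr0 : r 0 = 0) (hrm1 : r (-1) = 0) (hrm2 : r (-2) = 0)
    (hrec : ∀ k : ℤ, 1 ≤ k → r k = p ^ k.toNat + r (k - 3))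
    (br : ℤ → ℤ)
    (hbr : ∀ k : ℤ, 1 ≤ k → (br k = 1 ∨ br k = 2 ∨ br k = 3) ∧ (3 : ℤ) ∣ (k - br k))
    (k : ℤ) (hk : 4 ≤ k) (d : ℤ) :
    ∀ m εa εb : ℤ, 0 ≤ m → m ≤ (r (k - 3) : ℤ) - 1 →
      (εa = 0 ∨ εa = 1) → (εb = 0 ∨ εb = 1) →
    ∀ Dg : ℤ, Dg = m * (2 * (p : ℤ) ^ 3 - 2) + εa * (2 * (p : ℤ) ^ (br (k + 1)).toNat - 1)
        + εb * (2 * (p : ℤ) ^ (br (k + 2)).toNat - 1) + (2 * (p : ℤ) ^ (br k).toNat - 1)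
        - 2 * d * (p : ℤ) ^ (k - 1).toNat →
      (((p : ℤ) + 1 ≤ d → Dg ≤ -2 * (p : ℤ) ^ 3 + 2 * (p : ℤ) ^ 2 - 1) ∧
       (d ≤ -1 → 2 * (p : ℤ) ^ 3 + 2 * (p : ℤ) - 1 ≤ Dg)) := by
  have hP : (7:ℤ) ≤ (p:ℤ) := by exact_mod_cast hp7
  have key : ∀ n : ℕ, ∀ j : ℤ, 1 ≤ j → j ≤ (n:ℤ) →
      ((p:ℤ)^3 - 1) * (r j : ℤ) = (p:ℤ)^(j.toNat + 3) - (p:ℤ)^((br j).toNat) := by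
    intro n
    induction n with
    | zero => intro j h1 h2; omega
    | succ n ih =>
      intro j h1 h2
      obtain ⟨hbv, hbd⟩ := hbr j h1
      rcases le_or_gt j 3 with h3 | h3
      · have hbj : br j = j := by omega
        have hj : j = 1 ∨ j = 2 ∨ j = 3 := by omega
        rcases hj with rfl | rfl | rfl
        · have := hrec 1 (by norm_num)
          rw [show (1:ℤ)-3 = -2 by norm_num, hrm2] at this
          rw [this, hbj]
          push_cast
          norm_num
          ring
        · have := hrec 2 (by norm_num)
          rw [show (2:ℤ)-3 = -1 by norm_num, hrm1] at this
          rw [this, hbj]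
          push_cast
          norm_num
          ring
        · have := hrec 3 (by norm_num)
          rw [show (3:ℤ)-3 = 0 by norm_num, hr0] at this
          rw [this, hbj]
          push_cast
          norm_num
          ring
      · have h1' : 1 ≤ j - 3 := by omega
        have ihv := ih (j-3) h1' (by omega)
        obtain ⟨hbv', hbd'⟩ := hbr (j-3) h1'
        have hbeq : br (j-3) = br j := by omega
        have htn : (j-3).toNat + 3 = j.toNat := by omega
        rw [hbeq, htn] at ihv
        rw [hrec j h1]
        push_cast
        rw [pow_add]
        linear_combination ihv
  intro m εa εb hm0 hm1 hεa hεb Dg hDg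
  have hk3 : 1 ≤ k - 3 := by omega
  have hkey := key (k-3).toNat (k-3) hk3 (by omega)
  obtain ⟨hbv3, hbd3⟩ := hbr (k-3) hk3
  obtain ⟨hbvk, hbdk⟩ := hbr k (by omega)
  obtain ⟨hbv1, hbd1⟩ := hbr (k+1) (by omega)
  obtain ⟨hbv2, hbd2⟩ := hbr (k+2) (by omega)
  have hb3k : br (k-3) = br k := by omega
  have htn : (k-3).toNat + 3 = k.toNat := by omega
  have hkt : k.toNat = (k-1).toNat + 1 := by omega
  rw [hb3k, htn] at hkey
  have hXk : (p:ℤ)^(k.toNat) = (p:ℤ)^((k-1).toNat) * p := by rw [hkt, pow_succ]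
  rw [hXk] at hkey
  have e1 : ((1:ℤ)).toNat = 1 := rfl
  have e2 : ((2:ℤ)).toNat = 2 := rfl
  have e3 : ((3:ℤ)).toNat = 3 := rfl
  have hX : (p:ℤ)^3 ≤ (p:ℤ)^((k-1).toNat) :=
    pow_le_pow_right₀ (by linarith) (by omega)
  have hperm : (br k = 1 ∧ br (k+1) = 2 ∧ br (k+2) = 3) ∨
      (br k = 2 ∧ br (k+1) = 3 ∧ br (k+2) = 1) ∨
      (br k = 3 ∧ br (k+1) = 1 ∧ br (k+2) = 2) := by
    clear key hkey hX hDg hm0 hm1 hεa hεb hP htn hkt hb3k hbv3 hbd3 hrec hbr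
    omega
  subst hDg
  clear key hrec hbr hr0 hrm1 hrm2 hp hbd3 hbdk hbd1 hbd2 hbv3 hb3k htn hkt hp7 hk hk3 hXk hbvk hbv1 hbv2
  have h1p : (1:ℤ) ≤ (p:ℤ) := by linarith
  have h343 : (7:ℤ)^3 ≤ (p:ℤ)^3 := pow_le_pow_left₀ (by norm_num) hP 3
  have h2p3 : (0:ℤ) ≤ 2*(p:ℤ)^3 - 2 := by norm_num at h343; linarith
  have hP2 : (p:ℤ)^1 ≤ (p:ℤ)^2 := pow_le_pow_right₀ h1p one_le_two
  have hP3 : (p:ℤ)^2 ≤ (p:ℤ)^3 := pow_le_pow_right₀ h1p (by norm_num)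
  constructor
  · intro hd
    have hprod1 : 0 ≤ ((r (k-3):ℤ) - 1 - m) * (2*(p:ℤ)^3 - 2) :=
      mul_nonneg (by omega) h2p3
    have hprod2 : 0 ≤ (d - (p:ℤ) - 1) * (p:ℤ)^((k-1).toNat) :=
      mul_nonneg (by omega) (by positivity)
    rcases hεa with rfl | rfl <;> rcases hεb with rfl | rfl <;>
      rcases hperm with ⟨h1, h2, h3⟩ | ⟨h1, h2, h3⟩ | ⟨h1, h2, h3⟩ <;>
      simp only [h1, h2, h3, e1, e2, e3] at hkey ⊢ <;>
      linarith [hkey, hprod1, hprod2, hX, hP, hP2, hP3]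
  · intro hd
    have hq1 : 0 ≤ m * (2*(p:ℤ)^3 - 2) := mul_nonneg hm0 h2p3
    have hq2 : 0 ≤ (-d - 1) * (p:ℤ)^((k-1).toNat) :=
      mul_nonneg (by omega) (by positivity)
    rcases hεa with rfl | rfl <;> rcases hεb with rfl | rfl <;>
      rcases hperm with ⟨h1, h2, h3⟩ | ⟨h1, h2, h3⟩ | ⟨h1, h2, h3⟩ <;>
      simp only [h1, h2, h3, e1, e2, e3] at hkey ⊢ <;>
      linarith [hq1, hq2, hX, hP, hP2, hP3]
end
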